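/- If x, y ∈ G satisfy ‖f(x) − f(y)‖∞ > ‖x − y‖∞ (a non-expansion violation for the discretized instance f), then x ≠ y and ‖g(x̂) − g(ŷ)‖∞ ≥ ‖x̂ − ŷ‖∞; in particular, for every λ ∈ [0,1), the points x̂ and ŷ witness a violation of λ-contraction of g in the ℓ∞ norm, i.e., ‖g(x̂) − g(ŷ)‖∞ > λ·‖x̂ − ŷ‖∞. -/

import Mathlib

/-- The ℓ∞ distance `‖x − y‖∞ = max_i |x_i − y_i|` (as a natural number). -/
def linf {d : ℕ} (x y : Fin d → ℤ) : ℕ :=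
  Finset.univ.sup fun i => (x i - y i).natAbs

/-- The clamped sign function used to discretize displacements:
`sgne εh t = 1` if `t ≥ εh`, `−1` if `t ≤ −εh`, and `0` otherwise. -/
noncomputable def sgne (εh t : ℝ) : ℤ :=
  if εh ≤ t then 1 else if t ≤ -εh then -1 else 0

lemma le_linf {d : ℕ} (x y : Fin d → ℤ) (i : Fin d) :
    (x i - y i).natAbs ≤ linf x y := by
  unfold linf
  exact Finset.le_sup (f := fun j => (x j - y j).natAbs) (Finset.mem_univ i)

lemma sgne_cases (εh t : ℝ) :
    (sgne εh t = 1 ∧ εh ≤ t) ∨ (sgne εh t = -1 ∧ t ≤ -εh) ∨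
    (sgne εh t = 0 ∧ -εh < t ∧ t < εh) := by
  unfold sgne
  split_ifs with h1 h2
  · exact Or.inl ⟨rfl, h1⟩
  · exact Or.inr (Or.inl ⟨rfl, h2⟩)
  · exact Or.inr (Or.inr ⟨rfl, by linarith, by linarith⟩)

lemma sgne_key (εh a m u v : ℝ) (hε : 0 < εh) (ha : |a| ≤ m)
    (hΔ : m + 1 ≤ |a + ((sgne εh u : ℝ) - (sgne εh v : ℝ))|) :
    εh * m ≤ |εh * a + (u - v)| := by
  rw [abs_le] at ha
  rcases sgne_cases εh u with ⟨h,hu⟩|⟨h,hu⟩|⟨h,hu1,hu2⟩ <;>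
    rcases sgne_cases εh v with ⟨h',hv⟩|⟨h',hv⟩|⟨h',hv1,hv2⟩ <;>
    rw [h, h'] at hΔ <;> push_cast at hΔ <;>
    rcases le_abs.mp hΔ with hc|hc <;>
    rw [le_abs] <;>
    first
    | (exfalso; linarith)
    | (left; nlinarith [hε.le, mul_le_mul_of_nonneg_left ha.1 hε.le,
        mul_le_mul_of_nonneg_left ha.2 hε.le,
        mul_le_mul_of_nonneg_left hc hε.le])
    | (right; nlinarith [hε.le, mul_le_mul_of_nonneg_left ha.1 hε.le,
        mul_le_mul_of_nonneg_left ha.2 hε.le,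
        mul_le_mul_of_nonneg_left hc hε.le])

/-- A non-expansion violation of the discretized instance `f` maps back to a
violation of `λ`-contraction of `g` (for every `λ ∈ [0,1)`) in the ℓ∞ norm. -/
theorem dmac_violation_to_contraction_violation
    (d : ℕ) (hd : 1 ≤ d) (ε : ℝ) (hε0 : 0 < ε) (hε1 : ε < 1)
    (N : ℕ) (hN : N = ⌈1 / ε⌉₊)
    (g : (Fin d → ℝ) → (Fin d → ℝ))
    (hg : ∀ x : Fin d → ℝ, (∀ i, 0 ≤ x i ∧ x i ≤ 1) → ∀ i, 0 ≤ g x i ∧ g x i ≤ 1)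
    (f : (Fin d → ℤ) → (Fin d → ℤ))
    (hf : ∀ (y : Fin d → ℤ) (i : Fin d),
      f y i = y i + sgne ((N : ℝ)⁻¹)
        (g (fun k => (N : ℝ)⁻¹ * (y k : ℝ)) i - (N : ℝ)⁻¹ * (y i : ℝ)))
    (x y : Fin d → ℤ)
    (hx : ∀ i, 0 ≤ x i ∧ x i ≤ (N : ℤ)) (hy : ∀ i, 0 ≤ y i ∧ y i ≤ (N : ℤ))
    (hviol : linf x y < linf (f x) (f y)) :
    x ≠ y ∧
    ‖g (fun k => (N : ℝ)⁻¹ * (x k : ℝ)) - g (fun k => (N : ℝ)⁻¹ * (y k : ℝ))‖ ≥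
      ‖(fun k => (N : ℝ)⁻¹ * (x k : ℝ)) - (fun k => (N : ℝ)⁻¹ * (y k : ℝ))‖ ∧
    ∀ lam : ℝ, 0 ≤ lam → lam < 1 →
      ‖g (fun k => (N : ℝ)⁻¹ * (x k : ℝ)) - g (fun k => (N : ℝ)⁻¹ * (y k : ℝ))‖ >
        lam * ‖(fun k => (N : ℝ)⁻¹ * (x k : ℝ)) - (fun k => (N : ℝ)⁻¹ * (y k : ℝ))‖ := by
  have hd0 : 0 < d := hd
  haveI : Nonempty (Fin d) := ⟨⟨0, hd0⟩⟩
  have hN0 : 0 < N := by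
    rw [hN]; exact Nat.ceil_pos.mpr (by positivity)
  set εh : ℝ := (N : ℝ)⁻¹ with hεh
  have hεpos : 0 < εh := by positivity
  set X : Fin d → ℝ := fun k => εh * (x k : ℝ) with hX
  set Y : Fin d → ℝ := fun k => εh * (y k : ℝ) with hY
  set m : ℕ := linf x y with hm
  -- x ≠ y
  have hxy : x ≠ y := by
    rintro rfl
    simp [linf] at hviol
  -- the norm of X - Y equals εh * m
  have hub : ∀ i, |X i - Y i| ≤ εh * m := by
    intro i
    have h1 : (x i - y i).natAbs ≤ m := le_linf x y i
    have h2 : |((x i : ℝ) - (y i : ℝ))| ≤ (m : ℝ) := by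
      have := (Nat.cast_le (α := ℝ)).mpr h1
      rw [Nat.cast_natAbs] at this
      push_cast at this
      linarith
    have : X i - Y i = εh * ((x i : ℝ) - (y i : ℝ)) := by simp [hX, hY]; ring
    rw [this, abs_mul, abs_of_pos hεpos]
    exact mul_le_mul_of_nonneg_left h2 hεpos.le
  obtain ⟨i0, -, hi0⟩ := Finset.exists_mem_eq_sup (Finset.univ : Finset (Fin d))
    Finset.univ_nonempty (fun i => (x i - y i).natAbs)
  have hlb : εh * m ≤ |X i0 - Y i0| := by
    have h2 : (m : ℝ) = |((x i0 : ℝ) - (y i0 : ℝ))| := by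
      rw [hm, linf, hi0, Nat.cast_natAbs]
      push_cast
      rfl
    have h3 : X i0 - Y i0 = εh * ((x i0 : ℝ) - (y i0 : ℝ)) := by simp [hX, hY]; ring
    rw [h3, abs_mul, abs_of_pos hεpos, h2]
  have hnorm : ‖X - Y‖ = εh * m := by
    apply le_antisymm
    · apply pi_norm_le_iff_of_nonneg (by positivity) |>.mpr
      intro i
      simpa using hub i
    · calc εh * m ≤ |X i0 - Y i0| := hlb
        _ = ‖(X - Y) i0‖ := by simp
        _ ≤ ‖X - Y‖ := norm_le_pi_norm _ i0
  -- m ≥ 1 since x ≠ y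
  have hm1 : 1 ≤ m := by
    by_contra h
    push_neg at h
    interval_cases m
    apply hxy
    funext i
    have h1 : (x i - y i).natAbs ≤ 0 := hm ▸ le_linf x y i
    have := Nat.le_zero.mp h1
    have : x i - y i = 0 := Int.natAbs_eq_zero.mp this
    omega
  -- the main bound at a maximizing coordinate of f x - f y
  obtain ⟨i, -, hi⟩ := Finset.exists_mem_eq_sup (Finset.univ : Finset (Fin d))
    Finset.univ_nonempty (fun i => (f x i - f y i).natAbs)
  have hfb : m + 1 ≤ (f x i - f y i).natAbs := by
    have : linf (f x) (f y) = (f x i - f y i).natAbs := hi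
    omega
  have hgkey : εh * m ≤ |g X i - g Y i| := by
    have ha : |((x i : ℝ) - (y i : ℝ))| ≤ (m : ℝ) := by
      have h1 : (x i - y i).natAbs ≤ m := le_linf x y i
      have := (Nat.cast_le (α := ℝ)).mpr h1
      rw [Nat.cast_natAbs] at this
      push_cast at this
      linarith
    have hΔ : (m : ℝ) + 1 ≤
        |((x i : ℝ) - (y i : ℝ)) + ((sgne εh (g X i - εh * (x i : ℝ)) : ℝ)
          - (sgne εh (g Y i - εh * (y i : ℝ)) : ℝ))| := by
      have := (Nat.cast_le (α := ℝ)).mpr hfb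
      rw [Nat.cast_natAbs] at this
      push_cast at this
      have hfx : f x i = x i + sgne εh (g X i - εh * (x i : ℝ)) := hf x i
      have hfy : f y i = y i + sgne εh (g Y i - εh * (y i : ℝ)) := hf y i
      rw [hfx, hfy] at this
      push_cast at this
      refine this.trans_eq ?_
      congr 1; ring
    have := sgne_key εh ((x i : ℝ) - (y i : ℝ)) (m : ℝ)
      (g X i - εh * (x i : ℝ)) (g Y i - εh * (y i : ℝ)) hεpos ha hΔ
    convert this using 2
    ring
  have hgnorm : εh * m ≤ ‖g X - g Y‖ := by
    calc εh * m ≤ |g X i - g Y i| := hgkey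
      _ = ‖(g X - g Y) i‖ := by simp
      _ ≤ ‖g X - g Y‖ := norm_le_pi_norm _ i
  have hpos : 0 < εh * m := by
    have : (1 : ℝ) ≤ (m : ℝ) := by exact_mod_cast hm1
    nlinarith
  refine ⟨hxy, ?_, ?_⟩
  · rw [show (fun k => εh * (x k : ℝ)) - (fun k => εh * (y k : ℝ)) = X - Y from rfl, hnorm]
    exact hgnorm
  · intro lam hlam0 hlam1
    rw [show (fun k => εh * (x k : ℝ)) - (fun k => εh * (y k : ℝ)) = X - Y from rfl, hnorm]
    calc lam * (εh * m) < 1 * (εh * m) := by nlinarith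
      _ = εh * m := one_mul _
      _ ≤ ‖g X - g Y‖ := hgnorm
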